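/- Given a normal lax functor F : B ⇝ Cat from a small category B, the Grothendieck construction F ⋊ B, with objects pairs (x, b) where x is an object of F(b), arrows (x,b) → (x',b') pairs (f, α) with α : b → b' in B and f : F(α)(x) → x' in F(b'), and composition (f',α') ∘ (f,α) = (f' ∘ F(α')(f) ∘ F^x_{α',α}, α'α), is a category: composition is associative and unital. -/

import Mathlib

open CategoryTheory

universe v u

/-- A normal lax functor `F : B ⇝ Cat` from a small category `B`: categories `F b`,
functors `F α`, strictly preserved identities, structural natural transformations
`F_{α',α} : F (α ≫ α') ⟶ F α ⋙ F α'` which are normal and satisfy the cocycle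
(coherence) condition. -/
structure NLax (B : Type*) [Category B] where
  obj : B → Cat.{v, u}
  map : ∀ {b b' : B}, (b ⟶ b') → (obj b ⥤ obj b')
  map_id : ∀ b : B, map (𝟙 b) = 𝟭 (obj b)
  comp2 : ∀ {b b' b'' : B} (α : b ⟶ b') (α' : b' ⟶ b''), map (α ≫ α') ⟶ map α ⋙ map α'
  comp2_id_left : ∀ {b b' : B} (α : b ⟶ b'),
    comp2 (𝟙 b) α = eqToHom (by rw [Category.id_comp, map_id]; exact (Functor.id_comp _).symm)
  comp2_id_right : ∀ {b b' : B} (α : b ⟶ b'),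
    comp2 α (𝟙 b') = eqToHom (by rw [Category.comp_id, map_id]; exact (Functor.comp_id _).symm)
  comp2_assoc : ∀ {b₀ b₁ b₂ b₃ : B} (α : b₀ ⟶ b₁) (α' : b₁ ⟶ b₂) (α'' : b₂ ⟶ b₃)
    (x : obj b₀),
    (comp2 (α ≫ α') α'').app x ≫ (map α'').map ((comp2 α α').app x) =
      eqToHom (by rw [Category.assoc]) ≫ (comp2 α (α' ≫ α'')).app x ≫
        (comp2 α' α'').app ((map α).obj x)

variable {B : Type*} [Category B] (F : NLax B)

/-- The objects of the Grothendieck construction `F ⋊ B`: pairs `(x, b)` with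
`x` an object of `F b`. -/
def GrObj (F : NLax B) : Type _ := Σ b : B, F.obj b

/-- The arrows `(x, b) → (x', b')` of the Grothendieck construction: pairs `(f, α)` with
`α : b ⟶ b'` and `f : F α x ⟶ x'`. -/
def GrHom (X Y : GrObj F) : Type _ := Σ' α : X.1 ⟶ Y.1, ((F.map α).obj X.2 ⟶ Y.2)

/-- The identity arrow of `(x, b)`. -/
def GrId (X : GrObj F) : GrHom F X X :=
  ⟨𝟙 X.1, eqToHom (by rw [F.map_id]; rfl)⟩

/-- The composition `(f', α') ∘ (f, α) = (f' ∘ F α' f ∘ F_{α',α}^x, α ≫ α')` of the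
Grothendieck construction. -/
def GrComp {X Y Z : GrObj F} (f : GrHom F X Y) (g : GrHom F Y Z) : GrHom F X Z :=
  ⟨f.1 ≫ g.1, (F.comp2 f.1 g.1).app X.2 ≫ (F.map g.1).map f.2 ≫ g.2⟩

lemma GrHom_ext {X Y : GrObj F} (f g : GrHom F X Y) (h1 : f.1 = g.1)
    (h2 : f.2 = eqToHom (by rw [h1]) ≫ g.2) : f = g := by
  obtain ⟨a, b⟩ := f; obtain ⟨c, d⟩ := g
  dsimp at h1; subst h1
  simp only [eqToHom_refl, Category.id_comp] at h2
  subst h2; rfl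

/-- the Grothendieck construction `F ⋊ B` of a normal lax functor
`F : B ⇝ Cat` is a category: its composition is associative and unital. -/
theorem grothendieck_is_category {B : Type*} [Category B] (F : NLax B) :
    (∀ (W X Y Z : GrObj F) (f : GrHom F W X) (g : GrHom F X Y) (h : GrHom F Y Z),
      GrComp F (GrComp F f g) h = GrComp F f (GrComp F g h)) ∧
    (∀ (X Y : GrObj F) (f : GrHom F X Y), GrComp F (GrId F X) f = f) ∧
    (∀ (X Y : GrObj F) (f : GrHom F X Y), GrComp F f (GrId F Y) = f) := by
  refine ⟨?_, ?_, ?_⟩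
  · intro W X Y Z f g h
    refine GrHom_ext _ _ _ (Category.assoc _ _ _) ?_
    · simp only [GrComp, Functor.map_comp, Category.assoc]
      rw [← Category.assoc ((F.comp2 (f.1 ≫ g.1) h.1).app W.2), F.comp2_assoc]
      have nat := (F.comp2 g.1 h.1).naturality f.2
      dsimp at nat
      simp [← nat]
  · intro X Y f
    refine GrHom_ext _ _ _ (Category.id_comp _) ?_
    · simp only [GrComp, GrId, F.comp2_id_left, eqToHom_app, eqToHom_map, eqToHom_trans_assoc]
  · intro X Y f
    refine GrHom_ext _ _ _ (Category.comp_id _) ?_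
    · simp only [GrComp, GrId, F.comp2_id_right, eqToHom_app]
      have : F.map (𝟙 Y.1) = 𝟭 (F.obj Y.1) := F.map_id Y.1
      rw [Functor.congr_hom this f.2]
      simp
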